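/- In Probabilistic Serial, for every profile s of reported strict orderings, every agent i, and every k ∈ {1,…,n}, the total probability that agent i receives one of the first k items of her own reported ordering is at least k/n; that is, ∑_{t=1}^{k} p_{i, s_i(t)}(s) ≥ k/n, where s_i(t) denotes the t-th item in agent i's reported ordering. In particular, an agent reporting her true preference ordering obtains an allocation that stochastically dominates the uniform vector (1/n, …, 1/n), regardless of the other agents' reports. -/

import Mathlib

/-- A unit-sum valuation over `n` items. -/
def UnitSum {n : ℕ} (v : Fin n → ℝ) : Prop :=
  (∀ j, 0 ≤ v j) ∧ ∑ j, v j = 1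

/-- A unit-range valuation over `n` items. -/
def UnitRange {n : ℕ} (v : Fin n → ℝ) : Prop :=
  (∀ j, 0 ≤ v j ∧ v j ≤ 1) ∧ (∃ j, v j = 1) ∧ (∃ j, v j = 0)

/-- The optimal social welfare: the maximum over matchings (permutations of the
items) of the total utility. -/
noncomputable def SWopt {n : ℕ} (u : Fin n → Fin n → ℝ) : ℝ :=
  Finset.univ.sup' ⟨Equiv.refl (Fin n), Finset.mem_univ _⟩
    (fun μ : Equiv.Perm (Fin n) => ∑ i, u i (μ i))
/-- The state of the Probabilistic Serial eating process: `rem j` is the remaining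
amount of item `j`, `cons i j` the amount of item `j` eaten so far by agent `i`,
`time` the current time, and `fin j` the time at which item `j` was fully consumed. -/
structure PSState (n : ℕ) where
  rem : Fin n → ℝ
  cons : Fin n → Fin n → ℝ
  time : ℝ
  fin : Fin n → ℝ

open Classical in
/-- One phase of the Probabilistic Serial eating process: while some item remains,
every agent eats at rate 1 from her most preferred remaining item (preference
orderings are given as bijections from ranks to items, rank `0` being the most
preferred); the phase lasts until the first moment a currently eaten item is
exhausted. -/
noncomputable def psStep {n : ℕ} (s : Fin n → (Fin n ≃ Fin n)) (st : PSState n) :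
    PSState n :=
  let avail : Finset (Fin n) := Finset.univ.filter (fun j => 0 < st.rem j)
  if h : avail.Nonempty then
    -- the most preferred still-available item of each agent
    let top : Fin n → Fin n := fun i =>
      let R : Finset (Fin n) := Finset.univ.filter (fun r => s i r ∈ avail)
      if hR : R.Nonempty then s i (R.min' hR) else h.choose
    -- the number of agents currently eating item `j`
    let rate : Fin n → ℕ := fun j => (Finset.univ.filter (fun i => top i = j)).card
    -- the duration of the phase: first time an eaten item is exhausted
    let Δ : ℝ := sInf {x : ℝ | ∃ j ∈ avail, 0 < rate j ∧ x = st.rem j / (rate j : ℝ)}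
    { rem := fun j => st.rem j - (rate j : ℝ) * Δ
      cons := fun i j => st.cons i j + (if top i = j then Δ else 0)
      time := st.time + Δ
      fin := fun j =>
        if 0 < st.rem j ∧ st.rem j - (rate j : ℝ) * Δ ≤ 0 then st.time + Δ else st.fin j }
  else st

/-- The final state of the Probabilistic Serial eating process (there are at most
`n` phases, since in each phase at least one item is exhausted). -/
noncomputable def psFinal {n : ℕ} (s : Fin n → (Fin n ≃ Fin n)) : PSState n :=
  (psStep s)^[n] ⟨fun _ => 1, fun _ _ => 0, 0, fun _ => 1⟩

/-- `psProb s i j` is the probability that agent `i` receives item `j` under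
Probabilistic Serial at report profile `s`, i.e. the amount of item `j` eaten by
agent `i`. -/
noncomputable def psProb {n : ℕ} (s : Fin n → (Fin n ≃ Fin n)) (i j : Fin n) : ℝ :=
  (psFinal s).cons i j

/-- `psTime s j` is the time at which item `j` is fully consumed under
Probabilistic Serial at report profile `s`. -/
noncomputable def psTime {n : ℕ} (s : Fin n → (Fin n ≃ Fin n)) (j : Fin n) : ℝ :=
  (psFinal s).fin j

/-- The expected social welfare of Probabilistic Serial at report profile `s`
under true valuation profile `u`. -/
noncomputable def psSW {n : ℕ} (u : Fin n → Fin n → ℝ) (s : Fin n → (Fin n ≃ Fin n)) : ℝ :=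
  ∑ i, ∑ j, psProb s i j * u i j

/-- `s` is a pure Nash equilibrium of Probabilistic Serial at true valuation
profile `u`: no agent can strictly increase her expected utility by unilaterally
reporting a different ordering. -/
def PSNash {n : ℕ} (u : Fin n → Fin n → ℝ) (s : Fin n → (Fin n ≃ Fin n)) : Prop :=
  ∀ (i : Fin n) (s' : Fin n ≃ Fin n),
    ∑ j, psProb (Function.update s i s') i j * u i j ≤ ∑ j, psProb s i j * u i j


open Finset

noncomputable def pAvail {n : ℕ} (st : PSState n) : Finset (Fin n) :=
  Finset.univ.filter (fun j => 0 < st.rem j)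

open Classical in
noncomputable def pTop {n : ℕ} (s : Fin n → (Fin n ≃ Fin n)) (st : PSState n)
    (h : (pAvail st).Nonempty) : Fin n → Fin n := fun i =>
  let R : Finset (Fin n) := Finset.univ.filter (fun r => s i r ∈ pAvail st)
  if hR : R.Nonempty then s i (R.min' hR) else h.choose

noncomputable def pRate {n : ℕ} (s : Fin n → (Fin n ≃ Fin n)) (st : PSState n)
    (h : (pAvail st).Nonempty) : Fin n → ℕ := fun j =>
  (Finset.univ.filter (fun i => pTop s st h i = j)).card

noncomputable def pDelta {n : ℕ} (s : Fin n → (Fin n ≃ Fin n)) (st : PSState n)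
    (h : (pAvail st).Nonempty) : ℝ :=
  sInf {x : ℝ | ∃ j ∈ pAvail st, 0 < pRate s st h j ∧ x = st.rem j / (pRate s st h j : ℝ)}

lemma psStep_pos {n : ℕ} (s : Fin n → (Fin n ≃ Fin n)) (st : PSState n)
    (h : (pAvail st).Nonempty) :
    psStep s st =
      { rem := fun j => st.rem j - (pRate s st h j : ℝ) * pDelta s st h
        cons := fun i j => st.cons i j + (if pTop s st h i = j then pDelta s st h else 0)
        time := st.time + pDelta s st h
        fin := fun j =>
          if 0 < st.rem j ∧ st.rem j - (pRate s st h j : ℝ) * pDelta s st h ≤ 0 then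
            st.time + pDelta s st h else st.fin j } := by
  show (if h' : (pAvail st).Nonempty then _ else st) = _
  rw [dif_pos h]; rfl

lemma psStep_neg {n : ℕ} (s : Fin n → (Fin n ≃ Fin n)) (st : PSState n)
    (h : ¬ (pAvail st).Nonempty) :
    psStep s st = st := by
  show (if h' : (pAvail st).Nonempty then _ else st) = _
  rw [dif_neg h]

lemma pTop_mem {n : ℕ} (s : Fin n → (Fin n ≃ Fin n)) (st : PSState n)
    (h : (pAvail st).Nonempty) (a : Fin n) : pTop s st h a ∈ pAvail st := by
  obtain ⟨j0, hj0⟩ := h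
  have hR : (Finset.univ.filter (fun r => s a r ∈ pAvail st)).Nonempty := by
    refine ⟨(s a).symm j0, ?_⟩
    simp [hj0]
  simp only [pTop]
  rw [dif_pos hR]
  have := Finset.min'_mem _ hR
  simpa using this

lemma pRate_pos_mem {n : ℕ} (s : Fin n → (Fin n ≃ Fin n)) (st : PSState n)
    (h : (pAvail st).Nonempty) (j : Fin n) (hj : 0 < pRate s st h j) : j ∈ pAvail st := by
  rw [pRate, Finset.card_pos] at hj
  obtain ⟨a, ha⟩ := hj
  simp only [Finset.mem_filter] at ha
  exact ha.2 ▸ pTop_mem s st h a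

lemma pRate_sum {n : ℕ} (s : Fin n → (Fin n ≃ Fin n)) (st : PSState n)
    (h : (pAvail st).Nonempty) : ∑ j, pRate s st h j = n := by
  have := Finset.card_eq_sum_card_fiberwise
    (f := pTop s st h) (s := Finset.univ) (t := Finset.univ) (fun x _ => Finset.mem_univ _)
  simp only [Finset.card_univ, Fintype.card_fin] at this
  exact this.symm

lemma pDelta_mem {n : ℕ} (s : Fin n → (Fin n ≃ Fin n)) (st : PSState n)
    (h : (pAvail st).Nonempty) :
    pDelta s st h ∈
      {x : ℝ | ∃ j ∈ pAvail st, 0 < pRate s st h j ∧ x = st.rem j / (pRate s st h j : ℝ)} := by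
  set S := {x : ℝ | ∃ j ∈ pAvail st, 0 < pRate s st h j ∧ x = st.rem j / (pRate s st h j : ℝ)}
    with hS
  have hfin : S.Finite := by
    apply Set.Finite.subset (Set.finite_range (fun j : Fin n => st.rem j / (pRate s st h j : ℝ)))
    rintro x ⟨j, _, _, rfl⟩
    exact ⟨j, rfl⟩
  have hne : S.Nonempty := by
    obtain ⟨j0, hj0⟩ := id h
    refine ⟨st.rem (pTop s st h j0) / (pRate s st h (pTop s st h j0) : ℝ),
      pTop s st h j0, pTop_mem s st h j0, ?_, rfl⟩
    rw [pRate, Finset.card_pos]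
    exact ⟨j0, by simp⟩
  exact hne.csInf_mem hfin

lemma pDelta_nonneg {n : ℕ} (s : Fin n → (Fin n ≃ Fin n)) (st : PSState n)
    (h : (pAvail st).Nonempty) : 0 ≤ pDelta s st h := by
  obtain ⟨j, hj, hr, hEq⟩ := pDelta_mem s st h
  rw [hEq]
  have : 0 < st.rem j := by simpa [pAvail] using hj
  positivity

lemma pDelta_le {n : ℕ} (s : Fin n → (Fin n ≃ Fin n)) (st : PSState n)
    (h : (pAvail st).Nonempty) (j : Fin n) (hr : 0 < pRate s st h j) :
    (pRate s st h j : ℝ) * pDelta s st h ≤ st.rem j := by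
  set S := {x : ℝ | ∃ j ∈ pAvail st, 0 < pRate s st h j ∧ x = st.rem j / (pRate s st h j : ℝ)}
    with hS
  have hfin : S.Finite := by
    apply Set.Finite.subset (Set.finite_range (fun j : Fin n => st.rem j / (pRate s st h j : ℝ)))
    rintro x ⟨j, _, _, rfl⟩
    exact ⟨j, rfl⟩
  have hmem : st.rem j / (pRate s st h j : ℝ) ∈ S :=
    ⟨j, pRate_pos_mem s st h j hr, hr, rfl⟩
  have hle : pDelta s st h ≤ st.rem j / (pRate s st h j : ℝ) :=
    csInf_le hfin.bddBelow hmem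
  have hrpos : (0:ℝ) < (pRate s st h j : ℝ) := by exact_mod_cast hr
  calc (pRate s st h j : ℝ) * pDelta s st h
      ≤ (pRate s st h j : ℝ) * (st.rem j / (pRate s st h j : ℝ)) := by
        exact mul_le_mul_of_nonneg_left hle hrpos.le
    _ = st.rem j := by field_simp

lemma pRem_nonneg {n : ℕ} (s : Fin n → (Fin n ≃ Fin n)) (st : PSState n)
    (h : (pAvail st).Nonempty) (hrem : ∀ j, 0 ≤ st.rem j) (j : Fin n) :
    0 ≤ st.rem j - (pRate s st h j : ℝ) * pDelta s st h := by
  rcases Nat.eq_zero_or_pos (pRate s st h j) with hz | hp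
  · simp [hz, hrem j]
  · linarith [pDelta_le s st h j hp]

lemma pAvail_card_decr {n : ℕ} (s : Fin n → (Fin n ≃ Fin n)) (st : PSState n)
    (h : (pAvail st).Nonempty) :
    (pAvail (psStep s st)).card + 1 ≤ (pAvail st).card := by
  obtain ⟨j0, hj0, hr0, hEq⟩ := pDelta_mem s st h
  have hr0' : (0:ℝ) < (pRate s st h j0 : ℝ) := by exact_mod_cast hr0
  have hz : st.rem j0 - (pRate s st h j0 : ℝ) * pDelta s st h = 0 := by
    rw [hEq]; field_simp; ring
  have hsub : pAvail (psStep s st) ⊆ (pAvail st).erase j0 := by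
    intro x hx
    rw [psStep_pos s st h] at hx
    simp only [pAvail, Finset.mem_filter, Finset.mem_univ, true_and] at hx
    have hnn : (0:ℝ) ≤ (pRate s st h x : ℝ) * pDelta s st h :=
      mul_nonneg (by positivity) (pDelta_nonneg s st h)
    refine Finset.mem_erase.2 ⟨?_, ?_⟩
    · rintro rfl; linarith
    · simp only [pAvail, Finset.mem_filter, Finset.mem_univ, true_and]
      linarith
  have h1 : ((pAvail st).erase j0).card + 1 = (pAvail st).card := by
    rw [Finset.card_erase_of_mem hj0]
    exact Nat.succ_pred_eq_of_pos (Finset.card_pos.2 ⟨j0, hj0⟩)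
  calc (pAvail (psStep s st)).card + 1 ≤ ((pAvail st).erase j0).card + 1 :=
        Nat.add_le_add_right (Finset.card_le_card hsub) 1
    _ = (pAvail st).card := h1

lemma pTop_rank {n : ℕ} (s : Fin n → (Fin n ≃ Fin n)) (st : PSState n)
    (h : (pAvail st).Nonempty) (i : Fin n) (k : ℕ) (t : Fin n)
    (ht : (t : ℕ) < k) (hav : s i t ∈ pAvail st) :
    ∃ r : Fin n, (r : ℕ) < k ∧ pTop s st h i = s i r := by
  have hR : (Finset.univ.filter (fun r => s i r ∈ pAvail st)).Nonempty := ⟨t, Finset.mem_filter.2 ⟨Finset.mem_univ _, hav⟩⟩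
  refine ⟨(Finset.univ.filter (fun r => s i r ∈ pAvail st)).min' hR, ?_, ?_⟩
  · have hle := Finset.min'_le (Finset.univ.filter (fun r => s i r ∈ pAvail st)) t (Finset.mem_filter.2 ⟨Finset.mem_univ _, hav⟩)
    have : ((Finset.univ.filter (fun r => s i r ∈ pAvail st)).min' hR : Fin n) ≤ t := hle
    omega
  · rw [pTop]
    rw [dif_pos hR]

lemma psStep_rem {n : ℕ} (s : Fin n → (Fin n ≃ Fin n)) (st : PSState n)
    (h : (pAvail st).Nonempty) (j : Fin n) :
    (psStep s st).rem j = st.rem j - (pRate s st h j : ℝ) * pDelta s st h := by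
  rw [psStep_pos s st h]

lemma psStep_cons {n : ℕ} (s : Fin n → (Fin n ≃ Fin n)) (st : PSState n)
    (h : (pAvail st).Nonempty) (a j : Fin n) :
    (psStep s st).cons a j
      = st.cons a j + (if pTop s st h a = j then pDelta s st h else 0) := by
  rw [psStep_pos s st h]

lemma ps_invariant {n : ℕ} (s : Fin n → (Fin n ≃ Fin n)) (i : Fin n) (k : ℕ)
    (h2 : k ≤ n) (m : ℕ) :
    (∀ j, 0 ≤ ((psStep s)^[m] (⟨fun _ => 1, fun _ _ => 0, 0, fun _ => 1⟩ : PSState n)).rem j) ∧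
    (pAvail ((psStep s)^[m] (⟨fun _ => 1, fun _ _ => 0, 0, fun _ => 1⟩ : PSState n))).card
        + min m n ≤ n ∧
    ((k:ℝ) - ∑ t : Fin n, (if (t:ℕ) < k then
        ((psStep s)^[m] (⟨fun _ => 1, fun _ _ => 0, 0, fun _ => 1⟩ : PSState n)).rem (s i t)
      else 0)) / n
      ≤ ∑ t : Fin n, (if (t:ℕ) < k then
        ((psStep s)^[m] (⟨fun _ => 1, fun _ _ => 0, 0, fun _ => 1⟩ : PSState n)).cons i (s i t)
      else 0) := by
  have hn : 0 < n := i.pos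
  have hn' : (0:ℝ) < n := by exact_mod_cast hn
  induction m with
  | zero =>
      refine ⟨fun j => by norm_num, ?_, ?_⟩
      · simpa [pAvail] using Finset.card_filter_le (Finset.univ : Finset (Fin n)) _
      · have hA : ∑ t : Fin n, (if (t:ℕ) < k then (1:ℝ) else 0) = k := by
          rw [Fin.sum_univ_eq_sum_range (fun t => if t < k then (1:ℝ) else 0)]
          have hfil : (Finset.range n).filter (fun t => t < k) = Finset.range k := by
            ext x; simp; omega
          rw [← Finset.sum_filter, hfil, Finset.sum_const, Finset.card_range]
          simp
        simp only [Function.iterate_zero_apply, hA]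
        simp
  | succ m ih =>
      obtain ⟨ih1, ih2, ih3⟩ := ih
      set st := (psStep s)^[m] (⟨fun _ => 1, fun _ _ => 0, 0, fun _ => 1⟩ : PSState n) with hst
      simp only [Function.iterate_succ_apply', ← hst]
      by_cases h : (pAvail st).Nonempty
      · refine ⟨?_, ?_, ?_⟩
        · intro j
          rw [psStep_rem s st h j]
          exact pRem_nonneg s st h ih1 j
        · have hd := pAvail_card_decr s st h
          omega
        · have hΔ := pDelta_nonneg s st h
          simp only [psStep_rem s st h, psStep_cons s st h]
          have hsplitA : ∑ t : Fin n, (if (t:ℕ) < k then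
                st.rem (s i t) - (pRate s st h (s i t) : ℝ) * pDelta s st h else 0)
              = (∑ t : Fin n, (if (t:ℕ) < k then st.rem (s i t) else 0))
                - (∑ t : Fin n, (if (t:ℕ) < k then (pRate s st h (s i t) : ℝ) else 0))
                  * pDelta s st h := by
            rw [Finset.sum_mul, ← Finset.sum_sub_distrib]
            refine Finset.sum_congr rfl fun t _ => ?_
            split_ifs <;> ring
          have hsplitC : ∑ t : Fin n, (if (t:ℕ) < k then
                st.cons i (s i t) + (if pTop s st h i = s i t then pDelta s st h else 0) else 0)
              = (∑ t : Fin n, (if (t:ℕ) < k then st.cons i (s i t) else 0))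
                + ∑ t : Fin n, (if (t:ℕ) < k then
                    (if pTop s st h i = s i t then pDelta s st h else 0) else 0) := by
            rw [← Finset.sum_add_distrib]
            refine Finset.sum_congr rfl fun t _ => ?_
            split_ifs <;> ring
          rw [hsplitA, hsplitC]
          set A := ∑ t : Fin n, (if (t:ℕ) < k then st.rem (s i t) else 0) with hA
          set C := ∑ t : Fin n, (if (t:ℕ) < k then st.cons i (s i t) else 0) with hC
          set R := ∑ t : Fin n, (if (t:ℕ) < k then (pRate s st h (s i t) : ℝ) else 0) with hR
          by_cases hex : ∃ t : Fin n, (t:ℕ) < k ∧ 0 < st.rem (s i t)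
          · obtain ⟨t0, ht0, hpos0⟩ := hex
            have hav : s i t0 ∈ pAvail st := by
              simp only [pAvail, Finset.mem_filter, Finset.mem_univ, true_and]; exact hpos0
            obtain ⟨r, hrk, htop⟩ := pTop_rank s st h i k t0 ht0 hav
            have hE : ∑ t : Fin n, (if (t:ℕ) < k then
                  (if pTop s st h i = s i t then pDelta s st h else 0) else 0)
                = pDelta s st h := by
              rw [Finset.sum_eq_single r]
              · simp [hrk, htop]
              · intro b _ hb
                have hne : pTop s st h i ≠ s i b := by
                  rw [htop]
                  intro hEq
                  exact hb ((s i).injective hEq.symm) |>.elim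
                simp [hne]
              · intro habs; exact absurd (Finset.mem_univ r) habs
            rw [hE]
            have hRle : R ≤ (n:ℝ) := by
              rw [hR]
              have step1 : ∑ t : Fin n, (if (t:ℕ) < k then (pRate s st h (s i t) : ℝ) else 0)
                  ≤ ∑ t : Fin n, (pRate s st h (s i t) : ℝ) := by
                refine Finset.sum_le_sum fun t _ => ?_
                split_ifs
                · exact le_refl _
                · positivity
              have step2 : ∑ t : Fin n, (pRate s st h (s i t) : ℝ)
                  = ∑ j : Fin n, (pRate s st h j : ℝ) :=
                Equiv.sum_comp (s i) (fun j => (pRate s st h j : ℝ))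
              have step3 : ∑ j : Fin n, (pRate s st h j : ℝ) = (n:ℝ) := by
                rw [← Nat.cast_sum, pRate_sum s st h]
              linarith
            rw [div_le_iff₀ hn'] at ih3 ⊢
            have hmul : R * pDelta s st h ≤ (n:ℝ) * pDelta s st h :=
              mul_le_mul_of_nonneg_right hRle hΔ
            nlinarith [hmul, ih3]
          · push_neg at hex
            have hrate0 : ∀ t : Fin n, (t:ℕ) < k → pRate s st h (s i t) = 0 := by
              intro t ht
              by_contra hne
              have hp : 0 < pRate s st h (s i t) := Nat.pos_of_ne_zero hne
              have := pRate_pos_mem s st h _ hp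
              simp only [pAvail, Finset.mem_filter, Finset.mem_univ, true_and] at this
              exact absurd this (not_lt.2 (hex t ht))
            have hAeq : A - R * pDelta s st h = A := by
              have : R = 0 := by
                rw [hR]
                refine Finset.sum_eq_zero fun t _ => ?_
                split_ifs with htk
                · rw [hrate0 t htk]; norm_num
                · rfl
              rw [this]; ring
            rw [hAeq]
            have hCle : C ≤ C + ∑ t : Fin n, (if (t:ℕ) < k then
                (if pTop s st h i = s i t then pDelta s st h else 0) else 0) := by
              have : 0 ≤ ∑ t : Fin n, (if (t:ℕ) < k then
                  (if pTop s st h i = s i t then pDelta s st h else 0) else 0) := by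
                refine Finset.sum_nonneg fun t _ => ?_
                split_ifs <;> simp [pDelta_nonneg s st h]
              linarith
            linarith
      · rw [psStep_neg s st h]
        refine ⟨ih1, ?_, ih3⟩
        rw [Finset.not_nonempty_iff_eq_empty] at h
        rw [h]
        simp only [Finset.card_empty]
        omega

/-- Probabilistic Serial has a safe strategy: for every report profile `s`,
every agent `i` and every `k ∈ {1,…,n}`, the total probability that agent `i`
receives one of the first `k` items of her own reported ordering is at least
`k/n`; in particular a truthful report yields an allocation that stochastically
dominates the uniform vector `(1/n, …, 1/n)`, regardless of the other reports. -/
theorem ps_safe_strategy (n : ℕ) (s : Fin n → (Fin n ≃ Fin n)) (i : Fin n)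
    (k : ℕ) (h1 : 1 ≤ k) (h2 : k ≤ n) :
    (k : ℝ) / n ≤ ∑ t : Fin n, if (t : ℕ) < k then psProb s i (s i t) else 0 := by
  obtain ⟨hrem, hcard, hineq⟩ := ps_invariant s i k h2 n
  set st := (psStep s)^[n] (⟨fun _ => 1, fun _ _ => 0, 0, fun _ => 1⟩ : PSState n) with hst
  have hempty : pAvail st = ∅ := by
    rw [← Finset.card_eq_zero]
    omega
  have hA : ∑ t : Fin n, (if (t:ℕ) < k then st.rem (s i t) else 0) = 0 := by
    refine Finset.sum_eq_zero fun t _ => ?_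
    split_ifs
    · have hnot : s i t ∉ pAvail st := by rw [hempty]; exact Finset.notMem_empty _
      simp only [pAvail, Finset.mem_filter, Finset.mem_univ, true_and] at hnot
      have := hrem (s i t)
      linarith
    · rfl
  rw [hA, sub_zero] at hineq
  have hgoal : ∑ t : Fin n, (if (t:ℕ) < k then psProb s i (s i t) else 0)
      = ∑ t : Fin n, (if (t:ℕ) < k then st.cons i (s i t) else 0) := rfl
  rw [hgoal]
  exact hineq
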